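/- (Reduction to the difference Painlevé IV equation.) Let k ≥ 1 be an integer, s a nonnegative integer, and τ, b, b′, α, α′, β, β′ ∈ ℂ. Set Λ = diag(1, 0), A = (k+b)·[[−1, −αβ],[1/(αβ), 1]], C = [[b, bβ],[τ/β, τ]], A′ = (k+b′)·[[−1, −α′β′],[1/(α′β′), 1]], C′ = [[b′, b′β′],[τ/β′, τ]]. Assume that for every ζ ∈ ℂ with ζ ≠ s+1: (I + (ζ−(s+1))^{−1}A)·(Λζ + C) = (Λζ + C′)·(I + (ζ−(s+1))^{−1}A′). Define f = 1/α, f′ = 1/α′, g = τα + b + s + 1, g′ = τα′ + b′ + s + 2. Assume the genericity conditions: α, α′, β, β′ are nonzero; k+b ≠ 0 and k+b′ ≠ 0; b ≠ b′; α′ ≠ 1; g − s − 1 ≠ 0 and g + k − s − 1 ≠ 0. Then: (i) f·f′ = τ·g / ((g − s − 1)(g + k − s − 1)); (ii) g + g′ = τ/f′ − (s+1)/(1 − f′) − k + 2s + 3; (iii) β′/β = τ/(f·(g + k − s − 1)). -/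

import Mathlib

open Matrix

noncomputable section

/-- 2×2 complex matrices. -/
abbrev Mat2 : Type := Matrix (Fin 2) (Fin 2) ℂ

/-- reduction of the compatibility condition to the difference Painlevé IV
equation (the case `ξ = 0`). -/
theorem stmt18 (k : ℕ) (hk : 1 ≤ k) (s : ℕ)
    (τ b b' α α' β β' : ℂ)
    (hcomp : ∀ ζ : ℂ, ζ ≠ (s : ℂ) + 1 →
      (1 + (ζ - ((s : ℂ) + 1))⁻¹ •
          (((k : ℂ) + b) • (!![-1, -(α * β); (α * β)⁻¹, 1] : Mat2))) *
        (ζ • (Matrix.diagonal ![1, 0] : Mat2) + !![b, b * β; τ / β, τ]) =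
      (ζ • (Matrix.diagonal ![1, 0] : Mat2) + !![b', b' * β'; τ / β', τ]) *
        (1 + (ζ - ((s : ℂ) + 1))⁻¹ •
          (((k : ℂ) + b') • (!![-1, -(α' * β'); (α' * β')⁻¹, 1] : Mat2))))
    (f f' g g' : ℂ)
    (hf : f = α⁻¹) (hf' : f' = α'⁻¹)
    (hg : g = τ * α + b + (s : ℂ) + 1)
    (hg' : g' = τ * α' + b' + (s : ℂ) + 2)
    (hα : α ≠ 0) (hα' : α' ≠ 0) (hβ : β ≠ 0) (hβ' : β' ≠ 0)
    (hkb : (k : ℂ) + b ≠ 0) (hkb' : (k : ℂ) + b' ≠ 0)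
    (hbb' : b ≠ b')
    (hα'1 : α' ≠ 1)
    (hg1 : g - (s : ℂ) - 1 ≠ 0) (hg2 : g + (k : ℂ) - (s : ℂ) - 1 ≠ 0) :
    f * f' = τ * g / ((g - (s : ℂ) - 1) * (g + (k : ℂ) - (s : ℂ) - 1)) ∧
    g + g' = τ / f' - ((s : ℂ) + 1) / (1 - f') - (k : ℂ) + 2 * (s : ℂ) + 3 ∧
    β' / β = τ / (f * (g + (k : ℂ) - (s : ℂ) - 1)) := by
  subst hf hf' hg hg'
  have hX : τ * α + b ≠ 0 := by
    intro h; exact hg1 (by linear_combination h)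
  have hXk : τ * α + b + (k : ℂ) ≠ 0 := by
    intro h; exact hg2 (by linear_combination h)
  have hd : (Matrix.diagonal ![1, 0] : Mat2) = !![1,0;0,0] := by
    ext i j; fin_cases i <;> fin_cases j <;> simp [Matrix.diagonal]
  simp only [hd] at hcomp
  have h1 := hcomp ((s:ℂ)+2) (by intro h; have := sub_eq_zero.2 h; norm_num at this)
  have h2 := hcomp ((s:ℂ)) (by intro h; have := sub_eq_zero.2 h; norm_num at this)
  have e1 : ((s:ℂ)+2 - ((s:ℂ)+1))⁻¹ = 1 := by norm_num
  have e2 : ((s:ℂ) - ((s:ℂ)+1))⁻¹ = -1 := by norm_num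
  rw [e1] at h1
  rw [e2] at h2
  have p10 := (Matrix.ext_iff.2 h1) 1 0
  have p11 := (Matrix.ext_iff.2 h1) 1 1
  have p01 := (Matrix.ext_iff.2 h1) 0 1
  have m10 := (Matrix.ext_iff.2 h2) 1 0
  have m11 := (Matrix.ext_iff.2 h2) 1 1
  have m01 := (Matrix.ext_iff.2 h2) 0 1
  simp [Matrix.mul_apply, Fin.sum_univ_two, Matrix.one_apply, Matrix.smul_apply,
    smul_eq_mul] at p10 p11 p01 m10 m11 m01
  field_simp at p10 p11 p01 m10 m11 m01
  -- clean equations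
  have hββ' : (2:ℂ) * β * β' ≠ 0 := by
    simp [hβ, hβ']
  have hββ'α' : (2:ℂ) * β * β' * α' ≠ 0 := mul_ne_zero hββ' hα'
  have G4e : ((k:ℂ)+b) * (b + τ*α) = ((k:ℂ)+b') * τ * (1 - α') * α := by
    refine mul_right_cancel₀ hββ' ?_
    linear_combination (β*β') * (p11 - m11)
  have H2e : β' * (τ*α + ((k:ℂ)+b)) = τ*α*β := by
    refine mul_right_cancel₀ hββ'α' ?_
    linear_combination (β*β') * (p10 + m10)
  have G3e : ((k:ℂ)+b) * (((s:ℂ)+1) + b + τ*α) * α' * β' = ((k:ℂ)+b') * τ * (1 - α') * α * β := by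
    refine mul_right_cancel₀ hββ' ?_
    linear_combination (β*β') * (p10 - m10)
  have G2e : ((k:ℂ)+b) * (b + τ*α) * β + ((k:ℂ)+b') * b' * β' = ((k:ℂ)+b') * α' * β' * (((s:ℂ)+1) + b') := by
    refine mul_right_cancel₀ (two_ne_zero) ?_
    linear_combination m01 - p01
  have hτ : τ ≠ 0 := by
    intro h
    have h2 : β' * ((k:ℂ)+b) = 0 := by linear_combination H2e + (α*(β-β'))*h
    exact hβ' ((mul_eq_zero.1 h2).resolve_right hkb)
  -- key identities
  have keyi : (τ*α+b) * (τ*α+b+(k:ℂ)) = α*α'*τ*(((s:ℂ)+1) + τ*α + b) := by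
    refine mul_right_cancel₀ (mul_ne_zero hkb hβ) ?_
    linear_combination (((k:ℂ)+b)*(((s:ℂ)+1)+b+τ*α)*α')*H2e - (τ*α+b+(k:ℂ))*G3e + ((τ*α+b+(k:ℂ))*β)*G4e
  have keyii0 : ((k:ℂ)+b')*τ*α*((s:ℂ)+1) = ((k:ℂ)+b)*(b+τ*α)*((τ*α+b) + ((k:ℂ)+b') + ((s:ℂ)+1)) := by
    refine mul_right_cancel₀ hβ ?_
    linear_combination (-(τ*α+b+(k:ℂ)))*G2e - (((k:ℂ)+b')*α'*(((s:ℂ)+1)+b'))*H2e + (((k:ℂ)+b')*b')*H2e - ((((s:ℂ)+1)+b')*β)*G4e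
  have hK'τα : ((k:ℂ)+b')*τ*α ≠ 0 := mul_ne_zero (mul_ne_zero hkb' hτ) hα
  have keyii2 : α' * ((τ*α+b) + ((k:ℂ)+b') + ((s:ℂ)+1)) = (τ*α+b) + ((k:ℂ)+b') := by
    refine mul_right_cancel₀ hK'τα ?_
    linear_combination ((τ*α+b) + ((k:ℂ)+b') + ((s:ℂ)+1))*G4e + keyii0
  refine ⟨?_, ?_, ?_⟩
  · rw [show τ*α + b + (s:ℂ) + 1 - (s:ℂ) - 1 = τ*α + b from by ring,
      show τ*α + b + (s:ℂ) + 1 + (k:ℂ) - (s:ℂ) - 1 = τ*α + b + (k:ℂ) from by ring]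
    rw [eq_div_iff (mul_ne_zero hX hXk)]
    linear_combination (α⁻¹*α'⁻¹)*keyi + (τ*(τ*α+b+(s:ℂ)+1)*(α'*α'⁻¹))*(mul_inv_cancel₀ hα) + (τ*(τ*α+b+(s:ℂ)+1))*(mul_inv_cancel₀ hα')
  · have h1f' : 1 - α'⁻¹ ≠ 0 := by
      rw [sub_ne_zero]
      intro h
      exact hα'1 (inv_eq_one.mp h.symm)
    have h5 : α' - 1 ≠ 0 := sub_ne_zero.2 hα'1
    field_simp [h5]
    linear_combination keyii2
  · rw [show τ*α + b + (s:ℂ) + 1 + (k:ℂ) - (s:ℂ) - 1 = τ*α + b + (k:ℂ) from by ring]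
    field_simp
    linear_combination H2e
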